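/- Under the Weibull model with prior π(η,β) ∝ η^(−1) β^q where the posterior is proper (m ≥ 2, at least two distinct uncensored observations, q > −m), for every k > 0 the posterior expectation of β^k is finite: ∫₀^∞ ∫₀^∞ β^k · η^(mβ−1) β^(m+q) (∏ x_i^{δᵢβ}) exp(−(∑ x_i^β) η^β) dη dβ < ∞. -/

import Mathlib

open MeasureTheory Set Finset

lemma integrableOn_aux12 {p s b : ℝ} (hp : 0 < p) (hs : -1 < s) (hb : 0 < b) :
    IntegrableOn (fun x : ℝ => x ^ s * Real.exp (-b * x ^ p)) (Ioi 0) := by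
  have hbase : IntegrableOn (fun y : ℝ => y ^ ((s + 1) / p - 1) * Real.exp (-b * y ^ (1:ℝ)))
      (Ioi 0) :=
    integrableOn_rpow_mul_exp_neg_mul_rpow (by
      have : 0 < (s + 1) / p := div_pos (by linarith) hp
      linarith) one_pos hb
  have hbase' : IntegrableOn (fun y : ℝ => y ^ ((s + 1) / p - 1) * Real.exp (-b * y))
      (Ioi 0) := by
    refine hbase.congr_fun (fun y hy => ?_) measurableSet_Ioi
    simp only [Real.rpow_one]
  have h := (integrableOn_Ioi_comp_rpow_iff'
      (fun y : ℝ => y ^ ((s + 1) / p - 1) * Real.exp (-b * y)) hp.ne').mpr hbase'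
  refine h.congr_fun (fun t ht => ?_) measurableSet_Ioi
  have ht0 : (0:ℝ) < t := ht
  beta_reduce
  rw [smul_eq_mul, ← mul_assoc, ← Real.rpow_mul ht0.le, ← Real.rpow_add ht0]
  congr 2
  field_simp
  ring

lemma key_ineq12 {n : ℕ} (y : Fin n → ℝ) (hy : ∀ i, 0 < y i) (δ : Fin n → ℕ)
    (a b : Fin n) (hab : a ≠ b) (ha : δ a = 1) (hb : δ b = 1) (m : ℕ) (hm : m = ∑ i, δ i) :
    y a * ∏ i, y i ^ δ i ≤ y b * (∑ i, y i) ^ m := by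
  set T := ∑ i, y i with hT
  have hle : ∀ i, y i ≤ T := fun i =>
    Finset.single_le_sum (fun j _ => (hy j).le) (Finset.mem_univ i)
  have hTpos : 0 < T := lt_of_lt_of_le (hy a) (hle a)
  have hbmem : b ∈ Finset.univ.erase a := Finset.mem_erase.2 ⟨hab.symm, Finset.mem_univ b⟩
  set U := (Finset.univ.erase a).erase b with hU
  have h1 : ∑ i, δ i = δ a + ∑ i ∈ Finset.univ.erase a, δ i :=
    (Finset.add_sum_erase _ _ (Finset.mem_univ a)).symm
  have h2 : ∑ i ∈ Finset.univ.erase a, δ i = δ b + ∑ i ∈ U, δ i :=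
    (Finset.add_sum_erase _ _ hbmem).symm
  have hprod : ∏ i, y i ^ δ i = y a * (y b * ∏ i ∈ U, y i ^ δ i) := by
    rw [← Finset.mul_prod_erase _ _ (Finset.mem_univ a), ← Finset.mul_prod_erase _ _ hbmem,
      ha, hb, pow_one, pow_one]
  have hRnn : 0 ≤ ∏ i ∈ U, y i ^ δ i :=
    Finset.prod_nonneg fun i _ => pow_nonneg (hy i).le _
  have hRle : ∏ i ∈ U, y i ^ δ i ≤ ∏ i ∈ U, T ^ δ i :=
    Finset.prod_le_prod (fun i _ => pow_nonneg (hy i).le _)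
      (fun i _ => pow_le_pow_left₀ (hy i).le (hle i) _)
  have hTm : T ^ 2 * ∏ i ∈ U, T ^ δ i = T ^ m := by
    rw [Finset.prod_pow_eq_pow_sum, ← pow_add]
    congr 1
    omega
  rw [hprod, show y a * (y a * (y b * ∏ i ∈ U, y i ^ δ i))
      = y b * (y a ^ 2 * ∏ i ∈ U, y i ^ δ i) by ring]
  refine mul_le_mul_of_nonneg_left ?_ (hy b).le
  calc y a ^ 2 * ∏ i ∈ U, y i ^ δ i
      ≤ T ^ 2 * ∏ i ∈ U, T ^ δ i :=
        mul_le_mul (pow_le_pow_left₀ (hy a).le (hle a) 2) hRle hRnn (pow_nonneg hTpos.le 2)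
    _ = T ^ m := hTm

theorem stmt_12 (n : ℕ) (x : Fin n → ℝ) (hx : ∀ i, 0 < x i) (δ : Fin n → ℕ)
    (hδ : ∀ i, δ i = 0 ∨ δ i = 1) (m : ℕ) (hm : m = ∑ i, δ i) (hm2 : 2 ≤ m)
    (hdist : ∃ i j, i ≠ j ∧ δ i = 1 ∧ δ j = 1 ∧ x i ≠ x j) (q : ℝ) (hq : -(m : ℝ) < q)
    (k : ℝ) (hk : 0 < k) :
    (∫⁻ β in Ioi (0:ℝ), ∫⁻ η in Ioi (0:ℝ),
        ENNReal.ofReal (β ^ k * η ^ ((m : ℝ) * β - 1) * β ^ ((m : ℝ) + q) *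
          (∏ i, x i ^ ((δ i : ℝ) * β)) * Real.exp (-(∑ i, x i ^ β) * η ^ β))) < ⊤ := by
  obtain ⟨i, j, hij, hdi, hdj, hne⟩ := hdist
  obtain ⟨a, b, hab, hda, hdb, hba⟩ :
      ∃ a b : Fin n, a ≠ b ∧ δ a = 1 ∧ δ b = 1 ∧ x b < x a := by
    rcases hne.lt_or_gt with h | h
    · exact ⟨j, i, hij.symm, hdj, hdi, h⟩
    · exact ⟨i, j, hij, hdi, hdj, h⟩
  have hxa := hx a
  have hxb := hx b
  set c : ℝ := x b / x a with hc
  have hc0 : 0 < c := div_pos hxb hxa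
  have hc1 : c < 1 := (div_lt_one hxa).2 hba
  set L : ℝ := -Real.log c with hL
  have hLpos : 0 < L := by
    have := Real.log_neg hc0 hc1
    rw [hL]; linarith
  set p : ℝ := k + m + q with hp
  have hmR : (0:ℝ) < m := by exact_mod_cast Nat.lt_of_lt_of_le Nat.zero_lt_two hm2
  have hppos : 0 < p := by rw [hp]; linarith
  have hΓ : 0 < Real.Gamma m := Real.Gamma_pos_of_pos hmR
  have key : ∀ β ∈ Ioi (0:ℝ),
      (∫⁻ η in Ioi (0:ℝ), ENNReal.ofReal (β ^ k * η ^ ((m : ℝ) * β - 1) * β ^ ((m : ℝ) + q) *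
          (∏ i, x i ^ ((δ i : ℝ) * β)) * Real.exp (-(∑ i, x i ^ β) * η ^ β)))
        ≤ ENNReal.ofReal (Real.Gamma m * (β ^ (p - 1) * Real.exp (-L * β))) := by
    intro β hβ
    have hβ0 : (0:ℝ) < β := hβ
    set S : ℝ := ∑ i, x i ^ β with hS
    have hSpos : 0 < S :=
      Finset.sum_pos (fun i _ => Real.rpow_pos_of_pos (hx i) β) ⟨a, Finset.mem_univ a⟩
    set P : ℝ := ∏ i, x i ^ ((δ i : ℝ) * β) with hP
    have hPpos : 0 < P := Finset.prod_pos fun i _ => Real.rpow_pos_of_pos (hx i) _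
    set C : ℝ := β ^ k * β ^ ((m:ℝ) + q) * P with hC
    have hCpos : 0 < C := by
      have h1 : 0 < β ^ k := Real.rpow_pos_of_pos hβ0 k
      have h2 : 0 < β ^ ((m:ℝ) + q) := Real.rpow_pos_of_pos hβ0 _
      rw [hC]; positivity
    have heq : ∀ η : ℝ,
        β ^ k * η ^ ((m : ℝ) * β - 1) * β ^ ((m : ℝ) + q) * P * Real.exp (-S * η ^ β)
        = C * (η ^ ((m : ℝ) * β - 1) * Real.exp (-S * η ^ β)) := by
      intro η; rw [hC]; ring
    simp_rw [heq, ENNReal.ofReal_mul hCpos.le]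
    rw [lintegral_const_mul' _ _ ENNReal.ofReal_ne_top]
    have hmb0 : (0:ℝ) < (m:ℝ) * β := mul_pos hmR hβ0
    have h1q : (-1:ℝ) < (m:ℝ) * β - 1 := by linarith
    have hint : IntegrableOn (fun η : ℝ => η ^ ((m : ℝ) * β - 1) * Real.exp (-S * η ^ β))
        (Ioi 0) := integrableOn_aux12 hβ0 h1q hSpos
    have hnn : 0 ≤ᵐ[volume.restrict (Ioi (0:ℝ))]
        fun η : ℝ => η ^ ((m : ℝ) * β - 1) * Real.exp (-S * η ^ β) := by
      filter_upwards [ae_restrict_mem measurableSet_Ioi] with η hη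
      have hη0 : (0:ℝ) < η := hη
      positivity
    rw [← MeasureTheory.ofReal_integral_eq_lintegral_ofReal hint hnn,
      integral_rpow_mul_exp_neg_mul_rpow hβ0 h1q hSpos]
    have hmb : ((m:ℝ) * β - 1 + 1) / β = (m:ℝ) := by field_simp; ring
    have hmb2 : -((m:ℝ) * β - 1 + 1) / β = -(m:ℝ) := by field_simp; ring
    rw [hmb, hmb2, ← ENNReal.ofReal_mul hCpos.le]
    apply ENNReal.ofReal_le_ofReal
    have hy : ∀ i, 0 < x i ^ β := fun i => Real.rpow_pos_of_pos (hx i) β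
    have hkey : P * S ^ (-(m:ℝ)) ≤ Real.exp (-L * β) := by
      have hPeq : P = ∏ i, (x i ^ β) ^ δ i := by
        rw [hP]
        refine Finset.prod_congr rfl fun i _ => ?_
        rw [← Real.rpow_natCast (x i ^ β) (δ i), ← Real.rpow_mul (hx i).le, mul_comm]
      have hk1 := key_ineq12 (fun i => x i ^ β) hy δ a b hab hda hdb m hm
      simp only [← hS] at hk1
      have hSm : (0:ℝ) < S ^ m := pow_pos hSpos m
      have hexp : Real.exp (-L * β) = x b ^ β / x a ^ β := by
        rw [hL, neg_neg, ← Real.rpow_def_of_pos hc0, hc, Real.div_rpow hxb.le hxa.le]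
      have hSneg : S ^ (-(m:ℝ)) = (S ^ m)⁻¹ := by
        rw [← Real.rpow_natCast S m, ← Real.rpow_neg hSpos.le]
      rw [hSneg, hPeq, hexp]
      calc (∏ i, (x i ^ β) ^ δ i) * (S ^ m)⁻¹
          = ((x a ^ β) * ∏ i, (x i ^ β) ^ δ i) / (x a ^ β) / S ^ m := by
            field_simp
        _ ≤ ((x b ^ β) * S ^ m) / (x a ^ β) / S ^ m := by
            apply div_le_div_of_nonneg_right ?_ hSm.le
            exact div_le_div_of_nonneg_right hk1 (hy a).le
        _ = x b ^ β / x a ^ β := by field_simp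
    calc C * (S ^ (-(m:ℝ)) * (1 / β) * Real.Gamma m)
        = Real.Gamma m * ((β ^ k * β ^ ((m:ℝ) + q) * (1 / β)) * (P * S ^ (-(m:ℝ)))) := by
          rw [hC]; ring
      _ ≤ Real.Gamma m * (β ^ (p - 1) * Real.exp (-L * β)) := by
          refine mul_le_mul_of_nonneg_left ?_ hΓ.le
          have hb1 : β ^ k * β ^ ((m:ℝ) + q) * (1 / β) = β ^ (p - 1) := by
            rw [one_div, ← Real.rpow_neg_one β, ← Real.rpow_add hβ0, ← Real.rpow_add hβ0, hp]
            congr 1; ring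
          rw [hb1]
          exact mul_le_mul_of_nonneg_left hkey (Real.rpow_nonneg hβ0.le _)
  refine lt_of_le_of_lt (lintegral_mono_ae
    ((ae_restrict_iff' measurableSet_Ioi).2 (Filter.Eventually.of_forall key))) ?_
  simp_rw [ENNReal.ofReal_mul hΓ.le]
  rw [lintegral_const_mul' _ _ ENNReal.ofReal_ne_top]
  have hint2 : IntegrableOn (fun β : ℝ => β ^ (p - 1) * Real.exp (-L * β)) (Ioi 0) := by
    have h := integrableOn_aux12 (p := 1) (s := p - 1) (b := L) one_pos (by linarith) hLpos
    refine h.congr_fun (fun β hβ => ?_) measurableSet_Ioi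
    simp only [Real.rpow_one]
  exact ENNReal.mul_lt_top ENNReal.ofReal_lt_top hint2.lintegral_lt_top
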